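/- Restriction recursion for A: for m ≥ 2 and every λ, the restriction of A_λ^{(m)}(x | z^{(n)}|…|z^{(1)}) to the subvariety z_m^{(k)} = a τ^{2n−2k} (for all k = 1, …, n) equals (x − a τ^{n−1}) · Σ_{ρ=0}^{n−1} (−1)^ρ σ_ρ(aτ, aτ³, …, aτ^{2n−3}) A_{λ−ρ}^{(m−1)}(x | z'^{(n)}|…|z'^{(1)}), where z'^{(k)} = (z_1^{(k)},…,z_{m−1}^{(k)}). -/

import Mathlib

noncomputable section

/-- The `k`-th elementary symmetric function of the entries of a list. -/
def esymL {R : Type*} [CommRing R] (l : List R) (k : ℕ) : R :=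
  ((l.sublistsLen k).map List.prod).sum

/-- `f_λ^{(N)}(y | z₁,…,z_N)` where the variables are given as a list; the
deformation parameter `τ` and its inverse `τi` are passed separately so that
the definition makes sense over any commutative ring.  By the empty-sum
convention, `f_λ = 0` for `λ = 0`. -/
def fgenL {R : Type*} [CommRing R] (τ τi y : R) (lam : ℕ) (l : List R) : R :=
  ∑ κ ∈ Finset.range lam,
    (-1 : R) ^ κ * ((y * τ) ^ (lam - κ) - (y * τi) ^ (lam - κ)) * esymL l κ

/-- `τ ^ a` for an integer exponent `a`, negative powers being interpreted
via the inverse `τi` of `τ`. -/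
def mixpow {R : Type*} [CommRing R] (τ τi : R) (a : ℤ) : R :=
  if 0 ≤ a then τ ^ a.toNat else τi ^ (-a).toNat

/-- The argument list `z^{(n)}τ, …, z^{(k+1)}τ, z^{(k-1)}τ⁻¹, …, z^{(1)}τ⁻¹`
(the group `z^{(k)}` omitted); the group `z^{(k)}` is `Z (k-1)` (0-based). -/
def argList {R : Type*} [CommRing R] (n m : ℕ) (τ τi : R)
    (Z : Fin n → Fin m → R) (k : Fin n) : List R :=
  (((List.finRange n).reverse.filter (fun g => k < g)).map
      (fun g => (List.finRange m).map (fun j => Z g j * τ))).flatten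
  ++ (((List.finRange n).reverse.filter (fun g => g < k)).map
      (fun g => (List.finRange m).map (fun j => Z g j * τi))).flatten

/-- `x · A_λ^{(m)}(x | z^{(n)} | ⋯ | z^{(1)})`, i.e. the polynomial
`Σ_{k=1}^n Π_{j=1}^m (x - z_j^{(k)} τ^{2k-n-1}) ·
  f_λ^{((n-1)m)}(x τ^{n+1-2k} | z^{(n)}τ, …, z^{(k+1)}τ, z^{(k-1)}τ⁻¹, …, z^{(1)}τ⁻¹)`,
the group `z^{(k)}` being `Z (k-1)` (0-based). -/
def numerA {R : Type*} [CommRing R] (n m : ℕ) (τ τi : R) (lam : ℕ) (x : R)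
    (Z : Fin n → Fin m → R) : R :=
  ∑ k : Fin n,
    (∏ j : Fin m, (x - Z k j * mixpow τ τi (2 * ((k : ℕ) : ℤ) + 1 - (n : ℤ)))) *
      fgenL τ τi (x * mixpow τ τi ((n : ℤ) - (2 * ((k : ℕ) : ℤ) + 1))) lam
        (argList n m τ τi Z k)

/-- `A_λ^{(m)}(x | z^{(n)} | ⋯ | z^{(1)})` over `ℂ`, with `τ = q⁻¹`;
the group `z^{(k)}` is `Z (k-1)` (0-based). -/
def Afun (q : ℂ) (n m lam : ℕ) (x : ℂ) (Z : Fin n → Fin m → ℂ) : ℂ :=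
  numerA n m q⁻¹ q lam x Z / x

/-- The `k`-th elementary symmetric polynomial `σ_k(z₁,…,z_N)`. -/
def esymF {N : ℕ} (z : Fin N → ℂ) (k : ℕ) : ℂ :=
  ∑ s ∈ Finset.powersetCard k (Finset.univ : Finset (Fin N)), ∏ i ∈ s, z i


/-! ### Auxiliary lemmas -/

lemma esymL_eq_esymm {R : Type*} [CommRing R] (l : List R) (k : ℕ) :
    esymL l k = Multiset.esymm (↑l) k := by
  simp [esymL, Multiset.esymm, Multiset.powersetCard_coe, Multiset.map_coe, Function.comp_def]

@[simp] lemma esymL_zero {R : Type*} [CommRing R] (l : List R) : esymL l 0 = 1 := by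
  simp [esymL]

lemma esymL_cons_succ {R : Type*} [CommRing R] (w : R) (l : List R) (k : ℕ) :
    esymL (w :: l) (k+1) = esymL l (k+1) + w * esymL l k := by
  simp [esymL, List.sublistsLen_succ_cons, Function.comp_def, List.sum_map_mul_left]

lemma esymL_eq_zero {R : Type*} [CommRing R] {l : List R} {k : ℕ} (h : l.length < k) :
    esymL l k = 0 := by
  simp [esymL, List.sublistsLen_of_length_lt h]

lemma fgenL_congr {R : Type*} [CommRing R] (τ τi y : R) (lam : ℕ) {l l' : List R}
    (h : (↑l : Multiset R) = ↑l') : fgenL τ τi y lam l = fgenL τ τi y lam l' := by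
  simp only [fgenL, esymL_eq_esymm, h]

lemma fgenL_cons {R : Type*} [CommRing R] (τ τi y w : R) (l : List R) (lam : ℕ) :
    fgenL τ τi y lam (w :: l) = fgenL τ τi y lam l - w * fgenL τ τi y (lam - 1) l := by
  cases lam with
  | zero => simp [fgenL]
  | succ t =>
    have h1 : ∀ (L : List R), fgenL τ τi y (t+1) L
        = (∑ j ∈ Finset.range t,
            (-1:R)^(j+1) * ((y*τ)^(t-j) - (y*τi)^(t-j)) * esymL L (j+1))
          + ((y*τ)^(t+1) - (y*τi)^(t+1)) * esymL L 0 := by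
      intro L
      rw [fgenL, Finset.sum_range_succ']
      simp [Nat.succ_sub_succ]
    rw [h1, h1, Nat.add_sub_cancel]
    simp only [esymL_cons_succ, esymL_zero, mul_one]
    rw [fgenL, Finset.mul_sum]
    rw [show (∑ j ∈ Finset.range t,
        (-1:R)^(j+1) * ((y*τ)^(t-j) - (y*τi)^(t-j)) * (esymL l (j+1) + w * esymL l j))
      = ∑ j ∈ Finset.range t,
        ((-1:R)^(j+1) * ((y*τ)^(t-j) - (y*τi)^(t-j)) * esymL l (j+1)
          - w * ((-1:R)^j * ((y*τ)^(t-j) - (y*τi)^(t-j)) * esymL l j)) from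
      Finset.sum_congr rfl (fun j _ => by ring)]
    rw [Finset.sum_sub_distrib]
    ring

lemma fgenL_append {R : Type*} [CommRing R] (τ τi y : R) (W L : List R) (lam : ℕ) :
    fgenL τ τi y lam (W ++ L)
      = ∑ ρ ∈ Finset.range (W.length + 1),
          (-1:R)^ρ * esymL W ρ * fgenL τ τi y (lam - ρ) L := by
  induction W generalizing lam with
  | nil => simp
  | cons w W ih =>
    rw [List.cons_append, fgenL_cons, ih, ih, List.length_cons,
      Finset.sum_range_succ' (fun ρ => (-1:R)^ρ * esymL (w :: W) ρ * fgenL τ τi y (lam - ρ) L)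
        (W.length + 1)]
    rw [show (∑ j ∈ Finset.range (W.length + 1),
          (-1:R)^(j+1) * esymL (w :: W) (j+1) * fgenL τ τi y (lam - (j+1)) L)
        = ∑ j ∈ Finset.range (W.length + 1),
          ((-1:R)^(j+1) * esymL W (j+1) * fgenL τ τi y (lam - (j+1)) L
            - w * ((-1:R)^j * esymL W j * fgenL τ τi y (lam - 1 - j) L)) from
      Finset.sum_congr rfl (fun j _ => by
        rw [esymL_cons_succ]
        have : lam - (j+1) = lam - 1 - j := by omega
        rw [this]; ring)]
    rw [Finset.sum_sub_distrib, Finset.sum_range_succ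
      (fun j => (-1:R)^(j+1) * esymL W (j+1) * fgenL τ τi y (lam - (j+1)) L),
      esymL_eq_zero (by omega : W.length < W.length + 1),
      Finset.sum_range_succ' (fun ρ => (-1:R)^ρ * esymL W ρ * fgenL τ τi y (lam - ρ) L) W.length,
      Finset.mul_sum]
    simp only [esymL_zero, pow_zero, one_mul, Nat.sub_zero, mul_zero, zero_mul, add_zero]
    ring

lemma coe_flatten_succ {R : Type*} {α : Type*} (M : ℕ) (gs : List α) (F : α → Fin (M+1) → R) :
    (↑((gs.map (fun g => (List.finRange (M+1)).map (F g))).flatten) : Multiset R)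
      = ↑((gs.map (fun g => (List.finRange M).map (fun j => F g j.castSucc))).flatten)
        + ↑(gs.map (fun g => F g (Fin.last M))) := by
  induction gs with
  | nil => simp
  | cons g gs ih =>
    simp only [List.map_cons, List.flatten_cons, ← Multiset.coe_add] at *
    rw [ih, List.finRange_succ_last, List.map_append, List.map_map]
    simp only [← Multiset.coe_add, List.map_singleton, Function.comp_def, ← Multiset.cons_coe,
      ← Multiset.singleton_add]
    abel

lemma mrange_reflect (c : ℕ) :
    Multiset.map (fun j => c - 1 - j) (Multiset.range c) = Multiset.range c := by
  rw [← Multiset.coe_range, Multiset.map_coe]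
  conv_rhs => rw [← Multiset.coe_reverse]
  congr 1
  rw [List.range_eq_range', List.reverse_range', ← List.range_eq_range']
  simp

lemma filter_range_gt (n k : ℕ) (hk : k ≤ n) :
    Multiset.filter (fun v => v < k) (Multiset.range n) = Multiset.range k := by
  obtain ⟨c, rfl⟩ : ∃ c, n = k + c := ⟨n - k, by omega⟩
  rw [Multiset.range_add, Multiset.filter_add, Multiset.filter_eq_self.2, Multiset.filter_map,
    Multiset.filter_eq_nil.2, Multiset.map_zero, add_zero]
  · intro v hv; rw [Multiset.mem_range] at hv; show ¬ k + v < k; omega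
  · intro v hv; rw [Multiset.mem_range] at hv; show v < k; omega

lemma filter_range_lt (n k : ℕ) (hk : k < n) :
    Multiset.filter (fun v => k < v) (Multiset.range n)
      = Multiset.map (fun j => (k+1)+j) (Multiset.range (n-k-1)) := by
  obtain ⟨c, rfl⟩ : ∃ c, n = (k+1) + c := ⟨n - k - 1, by omega⟩
  rw [show (k+1) + c - k - 1 = c from by omega, Multiset.range_add, Multiset.filter_add,
    Multiset.filter_eq_nil.2, Multiset.filter_map, Multiset.filter_eq_self.2, zero_add]
  · intro v hv; rw [Multiset.mem_range] at hv; show k < k + 1 + v; omega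
  · intro v hv; rw [Multiset.mem_range] at hv; show ¬ k < v; omega

lemma extras_eq (n : ℕ) (hn : 2 ≤ n) (q a : ℂ) (hq : q ≠ 0) (k : Fin n)
    (w1 w2 : Fin n → ℂ)
    (h1 : ∀ g : Fin n, w1 g = a * q⁻¹ ^ (2*n-2*((g:ℕ)+1)) * q⁻¹)
    (h2 : ∀ g : Fin n, w2 g = a * q⁻¹ ^ (2*n-2*((g:ℕ)+1)) * q) :
    (↑(((List.finRange n).reverse.filter (fun g => k < g)).map w1) : Multiset ℂ)
      + ↑(((List.finRange n).reverse.filter (fun g => g < k)).map w2)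
      = Multiset.map (fun i => a * q⁻¹ ^ (2*i+1)) (Multiset.range (n-1)) := by
  set E : ℕ → ℂ := fun i => a * q⁻¹ ^ (2*i+1) with hE
  set kv := (k : ℕ) with hkv
  have hkn : kv < n := k.isLt
  set c := n - 1 - kv with hc
  have hs : Multiset.map Fin.val (↑(List.finRange n) : Multiset (Fin n)) = Multiset.range n := by
    rw [Multiset.map_coe, List.map_coe_finRange_eq_range, Multiset.coe_range]
  have e1 : (↑(((List.finRange n).reverse.filter (fun g => k < g)).map w1) : Multiset ℂ)
      = Multiset.map E (Multiset.range c) := by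
    rw [← Multiset.map_coe, ← Multiset.filter_coe, Multiset.coe_reverse]
    rw [show w1 = (fun v => a * q⁻¹ ^ (2*n-2*(v+1)) * q⁻¹) ∘ Fin.val from funext h1]
    have hf1 : Multiset.filter (fun g => k < g) (↑(List.finRange n) : Multiset (Fin n))
        = Multiset.filter ((fun v => kv < v) ∘ Fin.val) ↑(List.finRange n) :=
      Multiset.filter_congr (fun x _ => Iff.rfl)
    rw [hf1, ← Multiset.map_map, ← Multiset.filter_map, hs, filter_range_lt n kv hkn,
      Multiset.map_map]
    conv_rhs => rw [← mrange_reflect c, Multiset.map_map]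
    refine Multiset.map_congr (by rw [show n - kv - 1 = n - 1 - kv from by omega]) ?_
    intro j hj
    rw [Multiset.mem_range] at hj
    simp only [Function.comp_apply, hE]
    rw [mul_assoc, ← pow_succ, show 2*n-2*((kv+1+j)+1) + 1 = 2*(c-1-j)+1 from by omega]
  have e2 : (↑(((List.finRange n).reverse.filter (fun g => g < k)).map w2) : Multiset ℂ)
      = Multiset.map (fun j => E (c + j)) (Multiset.range kv) := by
    rw [← Multiset.map_coe, ← Multiset.filter_coe, Multiset.coe_reverse]
    rw [show w2 = (fun v => a * q⁻¹ ^ (2*n-2*(v+1)) * q) ∘ Fin.val from funext h2]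
    have hf2 : Multiset.filter (fun g => g < k) (↑(List.finRange n) : Multiset (Fin n))
        = Multiset.filter ((fun v => v < kv) ∘ Fin.val) ↑(List.finRange n) :=
      Multiset.filter_congr (fun x _ => Iff.rfl)
    rw [hf2, ← Multiset.map_map, ← Multiset.filter_map, hs, filter_range_gt n kv (by omega)]
    conv_rhs => rw [← mrange_reflect kv, Multiset.map_map]
    refine Multiset.map_congr rfl ?_
    intro v hv
    rw [Multiset.mem_range] at hv
    simp only [Function.comp_apply, hE]
    rw [show 2*n-2*(v+1) = (2*(c + (kv-1-v))+1) + 1 from by omega, pow_succ, mul_assoc,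
      mul_assoc, inv_mul_cancel₀ hq, mul_one]
  rw [e1, e2]
  rw [show (fun j => E (c + j)) = E ∘ (fun j => c + j) from rfl, ← Multiset.map_map,
    ← Multiset.map_add, ← Multiset.range_add, show c + kv = n - 1 from by omega]

lemma argList_split {R : Type*} [CommRing R] (n M : ℕ) (τ τi : R)
    (Z : Fin n → Fin (M+1) → R) (k : Fin n) :
    (↑(argList n (M+1) τ τi Z k) : Multiset R)
      = ↑(argList n M τ τi (fun g j => Z g j.castSucc) k)
        + ((↑(((List.finRange n).reverse.filter (fun g => k < g)).map
              (fun g => Z g (Fin.last M) * τ)) : Multiset R)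
          + ↑(((List.finRange n).reverse.filter (fun g => g < k)).map
              (fun g => Z g (Fin.last M) * τi))) := by
  unfold argList
  rw [← Multiset.coe_add, ← Multiset.coe_add,
    coe_flatten_succ M _ (fun g j => Z g j * τ), coe_flatten_succ M _ (fun g j => Z g j * τi)]
  abel

lemma pow_inv_mul_pow (q : ℂ) (hq : q ≠ 0) (e d : ℕ) (h : d ≤ e) :
    q⁻¹ ^ e * q ^ d = q⁻¹ ^ (e - d) := by
  obtain ⟨c, rfl⟩ : ∃ c, e = c + d := ⟨e - d, by omega⟩
  rw [pow_add, mul_assoc, ← mul_pow, inv_mul_cancel₀ hq, one_pow, mul_one]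
  congr 1; omega

lemma key_c (n : ℕ) (q a : ℂ) (hq : q ≠ 0) (u : ℕ) (hu : u < n) :
    (a * q⁻¹ ^ (2*n - 2*(u+1))) * mixpow q⁻¹ q (2 * (u : ℤ) + 1 - (n : ℤ))
      = a * q⁻¹ ^ (n - 1) := by
  rw [mixpow]
  split_ifs with h
  · rw [mul_assoc, ← pow_add]
    congr 2
    omega
  · rw [mul_assoc, pow_inv_mul_pow q hq _ _ (by omega)]
    congr 2
    omega

lemma esymF_eq (n : ℕ) (E : ℕ → ℂ) (ρ : ℕ) :
    esymF (fun i : Fin (n-1) => E (i : ℕ)) ρ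
      = Multiset.esymm (Multiset.map E (Multiset.range (n-1))) ρ := by
  rw [esymF, ← Finset.esymm_map_val (fun i : Fin (n-1) => E (i : ℕ)) Finset.univ ρ]
  congr 1
  rw [Fin.univ_def]
  show Multiset.map (fun i : Fin (n-1) => E (i : ℕ)) (↑(List.finRange (n-1)) : Multiset (Fin (n-1)))
      = Multiset.map E (Multiset.range (n-1))
  rw [← Multiset.coe_range, Multiset.map_coe, Multiset.map_coe, ← List.map_coe_finRange_eq_range,
    List.map_map]
  rfl

lemma main_numer (n M : ℕ) (hn : 2 ≤ n) (q a x : ℂ) (hq : q ≠ 0)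
    (Z : Fin n → Fin (M+1) → ℂ)
    (hZ : ∀ k : Fin n, Z k (Fin.last M) = a * q⁻¹ ^ (2*n - 2*((k:ℕ)+1)))
    (lam : ℕ) :
    numerA n (M+1) q⁻¹ q lam x Z
      = (x - a * q⁻¹ ^ (n-1)) * ∑ ρ ∈ Finset.range n, (-1:ℂ)^ρ *
          esymF (fun i : Fin (n-1) => a * q⁻¹ ^ (2*(i:ℕ)+1)) ρ *
          numerA n M q⁻¹ q (lam - ρ) x (fun k j => Z k j.castSucc) := by
  set W : List ℂ := (List.range (n-1)).map (fun i => a * q⁻¹ ^ (2*i+1)) with hW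
  have hWcoe : (↑W : Multiset ℂ)
      = Multiset.map (fun i => a * q⁻¹ ^ (2*i+1)) (Multiset.range (n-1)) := by
    rw [hW, ← Multiset.map_coe, Multiset.coe_range]
  have hWlen : W.length = n - 1 := by simp [hW]
  have hmult : ∀ k : Fin n, (↑(argList n (M+1) q⁻¹ q Z k) : Multiset ℂ)
      = ↑(W ++ argList n M q⁻¹ q (fun g j => Z g j.castSucc) k) := by
    intro k
    rw [argList_split, ← Multiset.coe_add,
      extras_eq n hn q a hq k _ _ (fun g => by rw [hZ g]) (fun g => by rw [hZ g]),
      ← hWcoe, add_comm]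
  have hesymW : ∀ ρ : ℕ, esymL W ρ
      = esymF (fun i : Fin (n-1) => a * q⁻¹ ^ (2*(i:ℕ)+1)) ρ := by
    intro ρ
    rw [esymL_eq_esymm, hWcoe]
    exact (esymF_eq n (fun i => a * q⁻¹ ^ (2*i+1)) ρ).symm
  have hf : ∀ (y : ℂ) (k : Fin n), fgenL q⁻¹ q y lam (argList n (M+1) q⁻¹ q Z k)
      = ∑ ρ ∈ Finset.range n, (-1:ℂ)^ρ *
          esymF (fun i : Fin (n-1) => a * q⁻¹ ^ (2*(i:ℕ)+1)) ρ *
          fgenL q⁻¹ q y (lam - ρ) (argList n M q⁻¹ q (fun g j => Z g j.castSucc) k) := by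
    intro y k
    rw [fgenL_congr _ _ _ _ (hmult k), fgenL_append, hWlen,
      show n - 1 + 1 = n from by omega]
    exact Finset.sum_congr rfl fun ρ _ => by rw [hesymW ρ]
  have hP : ∀ k : Fin n,
      (∏ j : Fin (M+1), (x - Z k j * mixpow q⁻¹ q (2 * ((k:ℕ):ℤ) + 1 - (n:ℤ))))
        = (∏ j : Fin M, (x - Z k j.castSucc * mixpow q⁻¹ q (2 * ((k:ℕ):ℤ) + 1 - (n:ℤ))))
          * (x - a * q⁻¹ ^ (n-1)) := by
    intro k
    rw [Fin.prod_univ_castSucc]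
    congr 1
    rw [hZ k, key_c n q a hq (k:ℕ) k.isLt]
  unfold numerA
  have step1 : ∑ k : Fin n,
      (∏ j : Fin (M+1), (x - Z k j * mixpow q⁻¹ q (2 * ((k:ℕ):ℤ) + 1 - (n:ℤ)))) *
        fgenL q⁻¹ q (x * mixpow q⁻¹ q ((n:ℤ) - (2 * ((k:ℕ):ℤ) + 1))) lam
          (argList n (M+1) q⁻¹ q Z k)
      = ∑ k : Fin n, ∑ ρ ∈ Finset.range n,
          (x - a * q⁻¹ ^ (n-1)) *
            ((-1:ℂ)^ρ * esymF (fun i : Fin (n-1) => a * q⁻¹ ^ (2*(i:ℕ)+1)) ρ) *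
            ((∏ j : Fin M, (x - Z k j.castSucc * mixpow q⁻¹ q (2 * ((k:ℕ):ℤ) + 1 - (n:ℤ)))) *
              fgenL q⁻¹ q (x * mixpow q⁻¹ q ((n:ℤ) - (2 * ((k:ℕ):ℤ) + 1))) (lam - ρ)
                (argList n M q⁻¹ q (fun g j => Z g j.castSucc) k)) := by
    refine Finset.sum_congr rfl fun k _ => ?_
    rw [hP k, hf (x * mixpow q⁻¹ q ((n:ℤ) - (2 * ((k:ℕ):ℤ) + 1))) k, Finset.mul_sum]
    exact Finset.sum_congr rfl fun ρ _ => by ring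
  rw [step1, Finset.sum_comm, Finset.mul_sum]
  refine Finset.sum_congr rfl fun ρ _ => ?_
  rw [Finset.mul_sum, Finset.mul_sum]
  refine Finset.sum_congr rfl fun k _ => ?_
  beta_reduce
  ring
/-- restriction recursion for `A`: for `m ≥ 2` and every `λ`,
restricting to `z_m^{(k)} = a τ^{2n-2k}` (for all `k = 1, …, n`) gives
`A_λ^{(m)}(x|z) = (x - aτ^{n-1}) Σ_{ρ=0}^{n-1} (-1)^ρ σ_ρ(aτ, aτ³, …, aτ^{2n-3})
  A_{λ-ρ}^{(m-1)}(x | z'^{(n)} | ⋯ | z'^{(1)})`, with `τ = q⁻¹` and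
`A_μ = 0` for `μ ≤ 0`. -/

theorem A_restriction_recursion (n m : ℕ) (hn : 2 ≤ n) (hm : 2 ≤ m)
    (q : ℂ) (hq : q ≠ 0) (a : ℂ) (x : ℂ) (hx : x ≠ 0)
    (Z : Fin n → Fin m → ℂ)
    (hZ : ∀ k : Fin n, Z k ⟨m - 1, by omega⟩ = a * (q⁻¹) ^ (2 * n - 2 * ((k : ℕ) + 1)))
    (lam : ℕ) :
    Afun q n m lam x Z
      = (x - a * (q⁻¹) ^ (n - 1)) *
        ∑ ρ ∈ Finset.range n, (-1 : ℂ) ^ ρ *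
          esymF (fun i : Fin (n - 1) => a * (q⁻¹) ^ (2 * (i : ℕ) + 1)) ρ *
          Afun q n (m - 1) (lam - ρ) x (fun k j => Z k ⟨(j : ℕ), by omega⟩) := by
  obtain ⟨M, rfl⟩ : ∃ M, m = M + 1 := ⟨m - 1, by omega⟩
  have hZ' : ∀ k : Fin n, Z k (Fin.last M) = a * q⁻¹ ^ (2*n - 2*((k:ℕ)+1)) :=
    fun k => hZ k
  have main := main_numer n M hn q a x hq Z hZ' lam
  unfold Afun
  rw [main, mul_div_assoc]
  congr 1
  rw [Finset.sum_div]
  refine Finset.sum_congr rfl fun ρ _ => ?_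
  rw [mul_div_assoc]
  rfl
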